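/- For every problem f :⊆ ℕ^ℕ ⇉ ℕ^ℕ the following are equivalent: (i) DIS ≤*_W f; (ii) DIS ≤*_sW f; (iii) f is effectively discontinuous. -/

import Mathlib

noncomputable section

/-- Baire space `ℕ^ℕ`. -/
abbrev Baire : Type := ℕ → ℕ

/-- The Cantor pairing `⟨n,k⟩ = (n+k)(n+k+1)/2 + k`. -/
def cpair (n k : ℕ) : ℕ := (n + k) * (n + k + 1) / 2 + k

/-- The inverse of the Cantor pairing. -/
noncomputable def cunpair (m : ℕ) : ℕ × ℕ :=
  Classical.epsilon fun x : ℕ × ℕ => cpair x.1 x.2 = m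

/-- A fixed bijective numbering `w : ℕ → List ℕ` of finite words. -/
def word (n : ℕ) : List ℕ := Denumerable.ofNat (List ℕ) n

/-- `l` is a finite prefix of the infinite sequence `p`. -/
def IsPrefixOf (l : List ℕ) (p : Baire) : Prop := l = (List.range l.length).map p

/-- Two words are comparable in the prefix order. -/
def WordComparable (u v : List ℕ) : Prop := u <+: v ∨ v <+: u

/-- The word `w(n_i)` decoded from the `i`-th entry of the code `q`. -/
noncomputable def wn (q : Baire) (i : ℕ) : List ℕ := word (cunpair (q i)).1

/-- The word `w(k_i)` decoded from the `i`-th entry of the code `q`. -/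
noncomputable def wk (q : Baire) (i : ℕ) : List ℕ := word (cunpair (q i)).2

/-- The code `q` is consistent. -/
def ConsistentCode (q : Baire) : Prop :=
  ∀ i j, WordComparable (wn q i) (wn q j) → WordComparable (wk q i) (wk q j)

/-- The continuous partial function `Φ_q :⊆ ℕ^ℕ → ℕ^ℕ` coded by `q`. -/
noncomputable def Phi (q : Baire) : Baire →. Baire := fun p =>
  ⟨ConsistentCode q ∧ ∀ m : ℕ, ∃ i, IsPrefixOf (wn q i) p ∧ m < (wk q i).length,
   fun _ => Classical.epsilon fun x : Baire =>
      ∀ i, IsPrefixOf (wn q i) p → IsPrefixOf (wk q i) x⟩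

/-- The pairing `⟨q,p⟩` on Baire space. -/
def bpair (q p : Baire) : Baire := fun n => if n % 2 = 0 then q (n / 2) else p (n / 2)

/-- Even part of a sequence. -/
def evens (r : Baire) : Baire := fun n => r (2 * n)

/-- Odd part of a sequence. -/
def odds (r : Baire) : Baire := fun n => r (2 * n + 1)

/-- The universal function `U(⟨q,p⟩) = Φ_q(p)`. -/
noncomputable def U : Baire →. Baire := fun r => Phi (evens r) (odds r)

/-- `h` is monotone for the prefix order. -/
def MonotoneWord (h : List ℕ → List ℕ) : Prop := ∀ u v, u <+: v → h u <+: h v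

/-- `h` approximates the partial function `F`. -/
def Approximates (h : List ℕ → List ℕ) (F : Baire →. Baire) : Prop :=
  ∀ p, ∀ hp : (F p).Dom,
    (∀ v, IsPrefixOf v p → IsPrefixOf (h v) ((F p).get hp)) ∧
    (∀ m : ℕ, ∃ v, IsPrefixOf v p ∧ m < (h v).length)

/-- `F :⊆ ℕ^ℕ → ℕ^ℕ` is continuous: some monotone word function approximates it. -/
def ContinuousPF (F : Baire →. Baire) : Prop := ∃ h, MonotoneWord h ∧ Approximates h F

/-- `F :⊆ ℕ^ℕ → ℕ^ℕ` is computable: some computable monotone word function approximates it. -/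
def ComputablePF (F : Baire →. Baire) : Prop :=
  ∃ h, Computable h ∧ MonotoneWord h ∧ Approximates h F

/-- A total function is computable iff it is computable as a partial function with full domain. -/
def ComputableTotal (F : Baire → Baire) : Prop := ComputablePF fun p => Part.some (F p)

/-- A problem (multivalued function on Baire space). -/
abbrev Problem : Type := Baire → Set Baire

/-- `F` is a realizer of the problem `f`. -/
def Realizes (F : Baire →. Baire) (f : Problem) : Prop :=
  ∀ p, (f p).Nonempty → ∃ h : (F p).Dom, (F p).get h ∈ f p

/-- `f` is continuous: it has a continuous realizer. -/
def ContinuousProblem (f : Problem) : Prop := ∃ F, ContinuousPF F ∧ Realizes F f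

/-- The discontinuity problem `DIS`. -/
noncomputable def DIS : Problem := fun p => {q | q ∉ U p}

/-- `D` is a discontinuity function for `f`. -/
def DiscontinuityFunction (D : Baire → Baire) (f : Problem) : Prop :=
  ∀ q, (f (D q)).Nonempty ∧ ∀ y ∈ Phi q (D q), y ∉ f (D q)

/-- `f` is computably discontinuous. -/
def ComputablyDiscontinuous (f : Problem) : Prop :=
  ∃ D, ComputableTotal D ∧ DiscontinuityFunction D f

/-- `f` is effectively discontinuous. -/
def EffectivelyDiscontinuous (f : Problem) : Prop :=
  ∃ D : Baire → Baire, Continuous D ∧ DiscontinuityFunction D f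

/-- Weihrauch reducibility `f ≤_W g`. -/
def WeihrauchRed (f g : Problem) : Prop :=
  ∃ H K : Baire →. Baire, ComputablePF H ∧ ComputablePF K ∧
    ∀ G : Baire →. Baire, Realizes G g →
      Realizes (fun p => (K p).bind fun s => (G s).bind fun t => H (bpair p t)) f

/-- Strong Weihrauch reducibility `f ≤_sW g`. -/
def StrongWeihrauchRed (f g : Problem) : Prop :=
  ∃ H K : Baire →. Baire, ComputablePF H ∧ ComputablePF K ∧
    ∀ G : Baire →. Baire, Realizes G g →
      Realizes (fun p => (K p).bind fun s => (G s).bind fun t => H t) f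

/-- Continuous Weihrauch reducibility `f ≤*_W g`. -/
def ContWeihrauchRed (f g : Problem) : Prop :=
  ∃ H K : Baire →. Baire, ContinuousPF H ∧ ContinuousPF K ∧
    ∀ G : Baire →. Baire, Realizes G g →
      Realizes (fun p => (K p).bind fun s => (G s).bind fun t => H (bpair p t)) f

/-- Continuous strong Weihrauch reducibility `f ≤*_sW g`. -/
def ContStrongWeihrauchRed (f g : Problem) : Prop :=
  ∃ H K : Baire →. Baire, ContinuousPF H ∧ ContinuousPF K ∧
    ∀ G : Baire →. Baire, Realizes G g →
      Realizes (fun p => (K p).bind fun s => (G s).bind fun t => H t) f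

/-- Concatenation of the first `n` moves. -/
def concatN (ms : ℕ → List ℕ) (n : ℕ) : List ℕ := ((List.range n).map ms).flatten

/-- The concatenated play is infinite. -/
def PlayInf (ms : ℕ → List ℕ) : Prop := ∀ m : ℕ, ∃ n, m < (concatN ms n).length

/-- The infinite sequence determined by an infinite play. -/
noncomputable def playLim (ms : ℕ → List ℕ) : Baire :=
  Classical.epsilon fun p : Baire => ∀ n, IsPrefixOf (concatN ms n) p

/-- Player II wins the run of the Wadge game of `f` given by the moves `xs` of I and `ys` of II. -/
def WadgeIIWins (f : Problem) (xs ys : ℕ → List ℕ) : Prop :=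
  (PlayInf xs ∧ (f (playLim xs)).Nonempty) → (PlayInf ys ∧ playLim ys ∈ f (playLim xs))

/-- The list of first `n` moves. -/
def histW (xs : ℕ → List ℕ) (n : ℕ) : List (List ℕ) := (List.range n).map xs

/-- `σ` is a winning strategy for Player II in the Wadge game of `f`. -/
def WadgeWinningII (f : Problem) (σ : List (List ℕ) → List ℕ) : Prop :=
  ∀ xs : ℕ → List ℕ, WadgeIIWins f xs fun i => σ (histW xs (i + 1))

/-- `σ` is a winning strategy for Player I in the Wadge game of `f`. -/
def WadgeWinningI (f : Problem) (σ : List (List ℕ) → List ℕ) : Prop :=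
  ∀ ys : ℕ → List ℕ, ¬ WadgeIIWins f (fun i => σ (histW ys i)) ys

/-- The list of first `n` values of a sequence. -/
def histN (x : Baire) (n : ℕ) : List ℕ := (List.range n).map x

/-- Player II wins the run `(x,y)` of the Lipschitz game of `f`. -/
def LipIIWins (f : Problem) (x y : Baire) : Prop := (f x).Nonempty → y ∈ f x

/-- `σ` is a winning strategy for Player II in the Lipschitz game of `f`. -/
def LipWinningII (f : Problem) (σ : List ℕ → ℕ) : Prop :=
  ∀ x : Baire, LipIIWins f x fun i => σ (histN x (i + 1))

/-- `σ` is a winning strategy for Player I in the Lipschitz game of `f`. -/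
def LipWinningI (f : Problem) (σ : List ℕ → ℕ) : Prop :=
  ∀ y : Baire, ¬ LipIIWins f (fun i => σ (histN y i)) y

/-- `σ` is a winning strategy for Player II in the Gale–Stewart game `A`. -/
def GSWinningII (A : Set Baire) (σ : List ℕ → ℕ) : Prop :=
  ∀ x : Baire, bpair x (fun i => σ (histN x (i + 1))) ∈ A

/-- `σ` is a winning strategy for Player I in the Gale–Stewart game `A`. -/
def GSWinningI (A : Set Baire) (σ : List ℕ → ℕ) : Prop :=
  ∀ y : Baire, bpair (fun i => σ (histN y i)) y ∉ A

/-- The totalization `Tf` of `f`. -/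
def Totalization (f : Problem) : Problem := fun p => {q | (f p).Nonempty → q ∈ f p}

/-- The paired graph `⟨graph(Tf)⟩ ⊆ ℕ^ℕ`. -/
def pairedGraph (f : Problem) : Set Baire :=
  {r | ∃ x y : Baire, r = bpair x y ∧ y ∈ Totalization f x}

/-- Domain of the word concatenation map `w*`. -/
def wstarDom (p : Baire) : Prop := PlayInf fun i => word (p i)

/-- The word concatenation map `w* : p ↦ w(p 0) w(p 1) ⋯` (on its domain). -/
noncomputable def wstar (p : Baire) : Baire := playLim fun i => word (p i)

/-- The problem `f^w = w*⁻¹ ∘ f ∘ w*`. -/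
noncomputable def wordLift (f : Problem) : Problem := fun p =>
  {q | wstarDom p ∧ (f (wstar p)).Nonempty ∧ wstarDom q ∧ wstar q ∈ f (wstar p)}

/-- The `i`-th component of a tupled sequence. -/
def tupleComp (p : Baire) (i : ℕ) : Baire := fun n => p (cpair i n)

/-- The parallelization `⟨f⟩` of `f`. -/
def Parallelization (f : Problem) : Problem := fun p =>
  {q | ∀ i, tupleComp q i ∈ f (tupleComp p i)}

/-- Turing reducibility: `p` is computable relative to the oracle `q`. -/
def TuringLe (p q : Baire) : Prop := ∃ F : Baire →. Baire, ComputablePF F ∧ p ∈ F q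

end
noncomputable section
open Classical

/-! ### cpair / cunpair -/

private def tri (s : ℕ) : ℕ := s * (s + 1) / 2

private lemma cpair_eq_tri (n k : ℕ) : cpair n k = tri (n + k) + k := rfl

private lemma tri_succ (s : ℕ) : tri (s + 1) = tri s + s + 1 := by
  show (s + 1) * (s + 1 + 1) / 2 = s * (s + 1) / 2 + s + 1
  rw [show (s + 1) * (s + 1 + 1) = s * (s + 1) + 2 * (s + 1) by ring,
    Nat.add_mul_div_left _ _ (by norm_num : 0 < 2)]
  omega

private lemma tri_mono : Monotone tri := by
  apply monotone_nat_of_le_succ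
  intro s; rw [tri_succ]; omega

lemma cpair_injective : Function.Injective (fun x : ℕ × ℕ => cpair x.1 x.2) := by
  have key : ∀ n k n' k', cpair n k = cpair n' k' → n + k = n' + k' := by
    intro n k n' k' h
    by_contra hne
    wlog hlt : n + k < n' + k' generalizing n k n' k'
    · exact this n' k' n k h.symm (Ne.symm hne) (by omega)
    rw [cpair_eq_tri, cpair_eq_tri] at h
    have h1 : tri (n + k) + k < tri (n + k + 1) := by rw [tri_succ]; omega
    have h2 : tri (n + k + 1) ≤ tri (n' + k') := tri_mono (by omega)
    omega
  intro ⟨n, k⟩ ⟨n', k'⟩ h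
  simp only at h
  have hs := key _ _ _ _ h
  rw [cpair_eq_tri, cpair_eq_tri, hs] at h
  simp only [Prod.mk.injEq]
  omega

lemma cunpair_cpair (n k : ℕ) : cunpair (cpair n k) = (n, k) := by
  have hex : ∃ x : ℕ × ℕ, cpair x.1 x.2 = cpair n k := ⟨(n, k), rfl⟩
  have := Classical.epsilon_spec hex
  exact cpair_injective this

/-! ### word -/

lemma word_encode (l : List ℕ) : word (Encodable.encode l) = l :=
  Denumerable.ofNat_encode l

/-! ### histN / IsPrefixOf -/

lemma histN_length (p : Baire) (n : ℕ) : (histN p n).length = n := by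
  simp [histN]

lemma histN_getElem (p : Baire) {n i : ℕ} (h : i < n) :
    (histN p n)[i]'(by simpa [histN] using h) = p i := by
  simp [histN]

lemma isPrefixOf_iff_histN (l : List ℕ) (p : Baire) :
    IsPrefixOf l p ↔ l = histN p l.length := Iff.rfl

lemma isPrefixOf_histN (p : Baire) (n : ℕ) : IsPrefixOf (histN p n) p := by
  rw [isPrefixOf_iff_histN, histN_length]

lemma IsPrefixOf.getElem {l : List ℕ} {p : Baire} (h : IsPrefixOf l p)
    {i : ℕ} (hi : i < l.length) : l[i] = p i := by
  rw [isPrefixOf_iff_histN] at h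
  rw [List.getElem_of_eq h hi, histN_getElem]
  exact hi

lemma isPrefixOf_of_forall_getElem {l : List ℕ} {p : Baire}
    (h : ∀ i (hi : i < l.length), l[i] = p i) : IsPrefixOf l p := by
  rw [isPrefixOf_iff_histN]
  apply List.ext_getElem (by simp [histN])
  intro i h1 h2
  rw [h i h1, histN_getElem]
  simpa [histN] using h2

lemma histN_prefix_histN (p : Baire) {m n : ℕ} (h : m ≤ n) :
    histN p m <+: histN p n := by
  refine List.IsPrefix.map p ?_
  simpa [List.take_range, Nat.min_eq_left h] using List.take_prefix m (List.range n)

lemma IsPrefixOf.trans_prefix {u v : List ℕ} {p : Baire} (huv : u <+: v)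
    (hv : IsPrefixOf v p) : IsPrefixOf u p := by
  apply isPrefixOf_of_forall_getElem
  intro i hi
  rw [← hv.getElem (by have := huv.length_le; omega)]
  exact List.IsPrefix.getElem huv hi

lemma prefix_of_isPrefixOf_le {u v : List ℕ} {p : Baire} (hu : IsPrefixOf u p)
    (hv : IsPrefixOf v p) (h : u.length ≤ v.length) : u <+: v := by
  rw [List.prefix_iff_eq_take]
  apply List.ext_getElem (by simp [List.length_take]; omega)
  intro i h1 h2
  rw [List.getElem_take, hu.getElem h1, hv.getElem (by omega)]

lemma wordComparable_of_isPrefixOf {u v : List ℕ} {p : Baire}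
    (hu : IsPrefixOf u p) (hv : IsPrefixOf v p) : WordComparable u v := by
  rcases le_total u.length v.length with h | h
  · exact Or.inl (prefix_of_isPrefixOf_le hu hv h)
  · exact Or.inr (prefix_of_isPrefixOf_le hv hu h)

end
noncomputable section
open Classical

/-! ### limits of chains of words -/

lemma limit_exists {S : Set (List ℕ)}
    (hchain : ∀ u ∈ S, ∀ v ∈ S, WordComparable u v)
    (hub : ∀ m : ℕ, ∃ l ∈ S, m < l.length) :
    ∃ x : Baire, ∀ l ∈ S, IsPrefixOf l x := by
  have pick : ∀ n : ℕ, ∃ l, l ∈ S ∧ n < l.length := by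
    intro n; obtain ⟨l, hl, h⟩ := hub n; exact ⟨l, hl, h⟩
  choose c hcS hclen using pick
  refine ⟨fun n => (c n)[n]'(hclen n), ?_⟩
  intro l hl
  apply isPrefixOf_of_forall_getElem
  intro i hi
  rcases hchain l hl (c i) (hcS i) with h | h
  · rw [List.IsPrefix.getElem h hi]
  · rw [← List.IsPrefix.getElem h (hclen i)]

lemma eq_of_prefixes {S : Set (List ℕ)} {x y : Baire}
    (hub : ∀ m : ℕ, ∃ l ∈ S, m < l.length)
    (hx : ∀ l ∈ S, IsPrefixOf l x) (hy : ∀ l ∈ S, IsPrefixOf l y) : x = y := by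
  funext n
  obtain ⟨l, hl, hn⟩ := hub n
  rw [← (hx l hl).getElem hn, (hy l hl).getElem hn]

/-! ### Phi -/

lemma Phi_dom_iff (q : Baire) (p : Baire) :
    (Phi q p).Dom ↔ ConsistentCode q ∧
      ∀ m : ℕ, ∃ i, IsPrefixOf (wn q i) p ∧ m < (wk q i).length := Iff.rfl

lemma Phi_get_spec {q p : Baire} (h : (Phi q p).Dom) :
    ∀ i, IsPrefixOf (wn q i) p → IsPrefixOf (wk q i) ((Phi q p).get h) := by
  obtain ⟨hcons, hub⟩ := h
  have hex : ∃ x : Baire, ∀ i, IsPrefixOf (wn q i) p → IsPrefixOf (wk q i) x := by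
    obtain ⟨x, hx⟩ := limit_exists (S := {l | ∃ i, IsPrefixOf (wn q i) p ∧ l = wk q i})
      (by rintro u ⟨i, hip, rfl⟩ v ⟨j, hjp, rfl⟩
          exact hcons i j (wordComparable_of_isPrefixOf hip hjp))
      (by intro m; obtain ⟨i, hip, hlen⟩ := hub m; exact ⟨wk q i, ⟨i, hip, rfl⟩, hlen⟩)
    exact ⟨x, fun i hip => hx _ ⟨i, hip, rfl⟩⟩
  exact Classical.epsilon_spec hex

lemma Phi_get_eq {q p : Baire} (h : (Phi q p).Dom) {y : Baire}
    (hy : ∀ i, IsPrefixOf (wn q i) p → IsPrefixOf (wk q i) y) :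
    (Phi q p).get h = y := by
  obtain ⟨hcons, hub⟩ := h
  refine eq_of_prefixes (S := {l | ∃ i, IsPrefixOf (wn q i) p ∧ l = wk q i})
    ?_ ?_ ?_
  · intro m; obtain ⟨i, hip, hlen⟩ := hub m; exact ⟨wk q i, ⟨i, hip, rfl⟩, hlen⟩
  · rintro l ⟨i, hip, rfl⟩; exact Phi_get_spec ⟨hcons, hub⟩ i hip
  · rintro l ⟨i, hip, rfl⟩; exact hy i hip

/-! ### bpair / evens / odds -/

lemma evens_bpair (a b : Baire) : evens (bpair a b) = a := by
  funext n
  simp [evens, bpair, Nat.mul_div_cancel_left, Nat.mul_mod_right]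

lemma odds_bpair (a b : Baire) : odds (bpair a b) = b := by
  funext n
  have h1 : (2 * n + 1) % 2 = 1 := by omega
  have h2 : (2 * n + 1) / 2 = n := by omega
  simp [odds, bpair, h1, h2]

lemma U_bpair (a b : Baire) : U (bpair a b) = Phi a b := by
  unfold U
  rw [evens_bpair, odds_bpair]

/-! ### DIS is total -/

lemma DIS_nonempty (p : Baire) : (DIS p).Nonempty := by
  classical
  by_cases h : (U p).Dom
  · refine ⟨fun _ => (U p).get h 0 + 1, ?_⟩
    intro hmem
    obtain ⟨h', hv⟩ := hmem
    have := congrFun hv 0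
    simp at this
  · exact ⟨fun _ => 0, fun hmem => h hmem.fst⟩
end
noncomputable section
open Classical

/-! ### Baire space topology helpers -/

lemma histN_congr {a b : Baire} {n : ℕ} (h : ∀ i < n, a i = b i) :
    histN a n = histN b n := by
  apply List.ext_getElem (by simp [histN])
  intro i h1 h2
  rw [histN_getElem a (by simpa [histN] using h1), histN_getElem b (by simpa [histN] using h1)]
  exact h i (by simpa [histN] using h1)

lemma histN_eq_iff {a b : Baire} {n : ℕ} :
    histN a n = histN b n ↔ ∀ i < n, a i = b i := by
  constructor
  · intro h i hi
    rw [← histN_getElem a hi, ← histN_getElem b hi]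
    exact List.getElem_of_eq h _
  · exact histN_congr

lemma isOpen_agree (q : Baire) (n : ℕ) : IsOpen {q' : Baire | ∀ i < n, q' i = q i} := by
  have : {q' : Baire | ∀ i < n, q' i = q i} =
      ⋂ i ∈ Finset.range n, (fun q' : Baire => q' i) ⁻¹' {q i} := by
    ext q'; simp [Set.mem_iInter]
  rw [this]
  apply isOpen_biInter_finset
  intro i _
  exact (continuous_apply i).isOpen_preimage _ (isOpen_discrete _)

lemma agree_mem_nhds (q : Baire) (n : ℕ) : {q' : Baire | ∀ i < n, q' i = q i} ∈ nhds q :=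
  (isOpen_agree q n).mem_nhds (fun i _ => rfl)

lemma exists_cyl_subset_of_isOpen {s : Set Baire} (hs : IsOpen s) {p : Baire} (hp : p ∈ s) :
    ∃ n, ∀ x : Baire, (∀ i < n, x i = p i) → x ∈ s := by
  obtain ⟨I, u, hIu, hsub⟩ := isOpen_pi_iff.1 hs p hp
  refine ⟨I.sup id + 1, fun x hx => hsub ?_⟩
  intro i hi
  have hiI : i ∈ I := hi
  have : x i = p i := hx i (by
    have := Finset.le_sup (f := id) hiI
    simpa using Nat.lt_succ_of_le this)
  rw [this]
  exact (hIu i hiI).2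

lemma continuous_of_locally_determined {F : Baire → Baire}
    (h : ∀ q n, ∃ N, ∀ q', (∀ i < N, q' i = q i) → F q' n = F q n) :
    Continuous F := by
  apply continuous_pi
  intro n
  rw [continuous_iff_continuousAt]
  intro q
  obtain ⟨N, hN⟩ := h q n
  have hev : ∀ᶠ q' in nhds q, F q' n = F q n :=
    Filter.mem_of_superset (agree_mem_nhds q N) (fun q' hq' => hN q' hq')
  exact (Filter.tendsto_pure.2 hev).mono_right (pure_le_nhds _)

/-! ### ContinuousPF basics -/

lemma continuousPF_id : ContinuousPF (fun p => Part.some p) := by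
  refine ⟨id, fun u v h => h, ?_⟩
  intro p hp
  constructor
  · intro v hv; simpa using hv
  · intro m
    exact ⟨histN p (m + 1), isPrefixOf_histN p (m + 1), by simp [histN_length]⟩

def oddsList (v : List ℕ) : List ℕ :=
  (List.range (v.length / 2)).map fun k => v.getD (2 * k + 1) 0

lemma getD_eq_of_prefix {u v : List ℕ} (h : u <+: v) {i : ℕ} (hi : i < u.length) :
    u.getD i 0 = v.getD i 0 := by
  rw [List.getD_eq_getElem _ _ hi, List.getD_eq_getElem _ _ (lt_of_lt_of_le hi h.length_le)]
  exact h.getElem hi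

lemma oddsList_mono : MonotoneWord oddsList := by
  intro u v h
  rw [List.prefix_iff_eq_take]
  apply List.ext_getElem
  · have := h.length_le
    simp [oddsList, List.length_take]
    omega
  · intro i h1 h2
    simp only [oddsList, List.getElem_take, List.getElem_map, List.getElem_range]
    apply getD_eq_of_prefix h
    simp only [oddsList, List.length_map, List.length_range] at h1
    omega

lemma oddsList_histN (r : Baire) (n : ℕ) :
    oddsList (histN r n) = histN (odds r) (n / 2) := by
  apply List.ext_getElem (by simp [oddsList, histN])
  intro i h1 h2
  simp only [oddsList, List.getElem_map, List.getElem_range, histN_length] at h1 ⊢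
  simp only [oddsList, List.length_map, List.length_range, histN_length] at h1
  rw [List.getD_eq_getElem _ _ (by rw [histN_length]; omega)]
  rw [histN_getElem r (by omega), histN_getElem (odds r) (by simpa [histN] using h2)]
  rfl

lemma approximates_comp_odds {H : Baire →. Baire} {h : List ℕ → List ℕ}
    (hmono : MonotoneWord h) (happrox : Approximates h H) :
    Approximates (fun v => h (oddsList v)) (fun r => H (odds r)) := by
  intro r hp
  obtain ⟨ha, hb⟩ := happrox (odds r) hp
  constructor
  · intro v hv
    apply ha
    -- oddsList v is a prefix of odds r
    have h1 : v = histN r v.length := hv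
    have : oddsList v <+: histN (odds r) (v.length / 2) := by
      rw [← oddsList_histN, ← h1]
    exact IsPrefixOf.trans_prefix this (isPrefixOf_histN _ _)
  · intro m
    obtain ⟨v', hv', hlen⟩ := hb m
    have h1 : v' = histN (odds r) v'.length := hv'
    refine ⟨histN r (2 * v'.length), isPrefixOf_histN _ _, ?_⟩
    have : oddsList (histN r (2 * v'.length)) = v' := by
      rw [oddsList_histN, Nat.mul_div_cancel_left _ (by norm_num : 0 < 2), ← h1]
    simpa [this] using hlen

lemma continuousPF_comp_odds {H : Baire →. Baire} (hH : ContinuousPF H) :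
    ContinuousPF (fun r => H (odds r)) := by
  obtain ⟨h, hmono, happrox⟩ := hH
  exact ⟨fun v => h (oddsList v), fun u v huv => hmono _ _ (oddsList_mono _ _ huv),
    approximates_comp_odds hmono happrox⟩

lemma continuousPF_oddsProj : ContinuousPF (fun r => Part.some (odds r)) := by
  have := continuousPF_comp_odds (H := fun p => Part.some p) continuousPF_id
  simpa using this

end
noncomputable section
open Classical

/-! ### topologically continuous total functions are ContinuousPF -/

def extSeq (v : List ℕ) : Baire := fun n => v.getD n 0

lemma isPrefixOf_extSeq (v : List ℕ) : IsPrefixOf v (extSeq v) := by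
  apply isPrefixOf_of_forall_getElem
  intro i hi
  show v[i] = v.getD i 0
  exact (List.getD_eq_getElem v 0 hi).symm

lemma agree_of_isPrefixOf_histN {p x : Baire} {N : ℕ}
    (h : IsPrefixOf (histN p N) x) : ∀ i < N, x i = p i := by
  intro i hi
  exact ((h.getElem (by rw [histN_length]; omega)).symm).trans (histN_getElem p hi)

def detP (F : Baire → Baire) (v : List ℕ) (m : ℕ) : Prop :=
  ∀ x y : Baire, IsPrefixOf v x → IsPrefixOf v y → ∀ i < m, F x i = F y i

noncomputable def detN (F : Baire → Baire) (v : List ℕ) : ℕ :=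
  Nat.findGreatest (detP F v) v.length

lemma detP_zero (F : Baire → Baire) (v : List ℕ) : detP F v 0 := by
  intro x y _ _ i hi; omega

lemma detP_detN (F : Baire → Baire) (v : List ℕ) : detP F v (detN F v) :=
  Nat.findGreatest_spec (Nat.zero_le _) (detP_zero F v)

lemma detP_mono_word {F : Baire → Baire} {u v : List ℕ} (h : u <+: v) {m : ℕ}
    (hm : detP F u m) : detP F v m := by
  intro x y hx hy
  exact hm x y (IsPrefixOf.trans_prefix h hx) (IsPrefixOf.trans_prefix h hy)

lemma detN_mono {F : Baire → Baire} {u v : List ℕ} (h : u <+: v) :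
    detN F u ≤ detN F v :=
  Nat.le_findGreatest (le_trans (Nat.findGreatest_le _) h.length_le)
    (detP_mono_word h (detP_detN F u))

noncomputable def contApprox (F : Baire → Baire) (v : List ℕ) : List ℕ :=
  histN (F (extSeq v)) (detN F v)

lemma contApprox_mono (F : Baire → Baire) : MonotoneWord (contApprox F) := by
  intro u v h
  unfold contApprox
  have hle : detN F u ≤ detN F v := detN_mono h
  have hagree : ∀ i < detN F u, F (extSeq u) i = F (extSeq v) i := by
    intro i hi
    exact detP_detN F u (extSeq u) (extSeq v) (isPrefixOf_extSeq u)
      (IsPrefixOf.trans_prefix h (isPrefixOf_extSeq v)) i hi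
  calc histN (F (extSeq u)) (detN F u) = histN (F (extSeq v)) (detN F u) :=
        histN_congr hagree
    _ <+: histN (F (extSeq v)) (detN F v) := histN_prefix_histN _ hle

lemma contApprox_approximates {F : Baire → Baire} (hF : Continuous F) :
    Approximates (contApprox F) (fun p => Part.some (F p)) := by
  intro p _
  constructor
  · intro v hv
    have : contApprox F v = histN (F p) (detN F v) := by
      unfold contApprox
      apply histN_congr
      intro i hi
      exact detP_detN F v (extSeq v) p (isPrefixOf_extSeq v) hv i hi
    rw [Part.get_some, this]
    exact isPrefixOf_histN _ _
  · intro m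
    set O : Set Baire := {x | ∀ i < m + 1, F x i = F p i} with hO
    have hOopen : IsOpen O := by
      have : O = ⋂ i ∈ Finset.range (m + 1), (fun x : Baire => F x i) ⁻¹' {F p i} := by
        ext x; simp [hO]
      rw [this]
      apply isOpen_biInter_finset
      intro i _
      exact (((continuous_apply i).comp hF)).isOpen_preimage _ (isOpen_discrete _)
    obtain ⟨n, hn⟩ := exists_cyl_subset_of_isOpen hOopen (fun i _ => rfl)
    set N := max n (m + 1) with hN
    have hmem : ∀ x : Baire, IsPrefixOf (histN p N) x → x ∈ O := by
      intro x hx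
      apply hn
      intro i hi
      exact agree_of_isPrefixOf_histN hx i (by omega)
    have hdet : m + 1 ≤ detN F (histN p N) := by
      apply Nat.le_findGreatest (by rw [histN_length]; omega)
      intro x y hx hy i hi
      rw [hmem x hx i hi, hmem y hy i hi]
    refine ⟨histN p N, isPrefixOf_histN _ _, ?_⟩
    unfold contApprox
    rw [histN_length]
    omega

lemma continuousPF_of_continuous {F : Baire → Baire} (hF : Continuous F) :
    ContinuousPF (fun p => Part.some (F p)) :=
  ⟨contApprox F, contApprox_mono F, contApprox_approximates hF⟩

end
noncomputable section
open Classical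

/-! ### Realizes helpers -/

lemma realizes_of_mem {F : Baire →. Baire} {f : Problem}
    (h : ∀ p, (f p).Nonempty → ∃ a ∈ F p, a ∈ f p) : Realizes F f := by
  intro p hp
  obtain ⟨a, ⟨hd, hg⟩, hfa⟩ := h p hp
  exact ⟨hd, hg ▸ hfa⟩

lemma mem_of_realizes {F : Baire →. Baire} {f : Problem} (h : Realizes F f)
    {p : Baire} (hp : (f p).Nonempty) : ∃ a ∈ F p, a ∈ f p := by
  obtain ⟨hd, hg⟩ := h p hp
  exact ⟨(F p).get hd, ⟨hd, rfl⟩, hg⟩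

lemma nat_find_congr {P Q : ℕ → Prop} [DecidablePred P] [DecidablePred Q]
    (h : ∀ n, P n ↔ Q n) (hP : ∃ n, P n) (hQ : ∃ n, Q n) :
    Nat.find hP = Nat.find hQ :=
  le_antisymm (Nat.find_le ((h _).2 (Nat.find_spec hQ)))
    (Nat.find_le ((h _).1 (Nat.find_spec hP)))

lemma isPrefixOf_nil (x : Baire) : IsPrefixOf [] x := rfl

lemma wn_wk_of_eq {q : Baire} {i : ℕ} {a b : List ℕ}
    (h : q i = cpair (Encodable.encode a) (Encodable.encode b)) :
    wn q i = a ∧ wk q i = b := by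
  unfold wn wk
  rw [h, cunpair_cpair]
  exact ⟨word_encode a, word_encode b⟩

lemma isPrefixOf_congr {l : List ℕ} {x y : Baire} (h : ∀ n < l.length, x n = y n) :
    (IsPrefixOf l x ↔ IsPrefixOf l y) := by
  rw [isPrefixOf_iff_histN, isPrefixOf_iff_histN, histN_congr h]

/-! ### sW implies W (continuous versions) -/

lemma contStrong_implies_contWeihrauch {f g : Problem}
    (h : ContStrongWeihrauchRed f g) : ContWeihrauchRed f g := by
  obtain ⟨H, K, hH, hK, hred⟩ := h
  refine ⟨fun r => H (odds r), K, continuousPF_comp_odds hH, hK, ?_⟩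
  intro G hG
  have := hred G hG
  convert this using 2 with p
  apply iff_of_eq
  congr 1
  funext p
  apply congrArg
  funext s
  apply congrArg
  funext t
  show H (odds (bpair p t)) = H t
  rw [odds_bpair]

end
noncomputable section
open Classical

/-! ### the code of the constant function with value U p -/

noncomputable def tauU (p : Baire) : ℕ → List ℕ
  | 0 => []
  | i+1 =>
    if h : ∃ j, j < i + 1 ∧ IsPrefixOf (wn (evens p) j) (odds p) ∧
        tauU p i <+: wk (evens p) j ∧ (tauU p i).length < (wk (evens p) j).length
    then wk (evens p) (Nat.find h)
    else tauU p i

lemma tauU_prefix_succ (p : Baire) (i : ℕ) : tauU p i <+: tauU p (i + 1) := by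
  rw [tauU]
  split
  · next h => exact (Nat.find_spec h).2.2.1
  · exact List.prefix_refl _

lemma tauU_prefix_le (p : Baire) {i j : ℕ} (h : i ≤ j) : tauU p i <+: tauU p j := by
  induction j with
  | zero => simp_all
  | succ j IH =>
    rcases Nat.lt_or_ge i (j + 1) with h' | h'
    · exact (IH (by omega)).trans (tauU_prefix_succ p j)
    · have : i = j + 1 := by omega
      subst this; exact List.prefix_refl _

lemma tauU_grows {p : Baire} {i : ℕ}
    (h : ∃ j, j < i + 1 ∧ IsPrefixOf (wn (evens p) j) (odds p) ∧
        tauU p i <+: wk (evens p) j ∧ (tauU p i).length < (wk (evens p) j).length) :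
    (tauU p i).length < (tauU p (i + 1)).length := by
  rw [tauU, dif_pos h]
  exact (Nat.find_spec h).2.2.2

lemma tauU_isPrefixOf {p : Baire} (hU : (U p).Dom) (i : ℕ) :
    IsPrefixOf (tauU p i) ((U p).get hU) := by
  induction i with
  | zero => exact isPrefixOf_nil _
  | succ i IH =>
    rw [tauU]
    split
    · next h => exact Phi_get_spec hU _ (Nat.find_spec h).2.1
    · exact IH

lemma tauU_unbounded {p : Baire} (hU : (U p).Dom) (m : ℕ) :
    ∃ i, m < (tauU p i).length := by
  obtain ⟨j0, hpre, hlen⟩ := hU.2 m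
  have step : ∀ i, j0 ≤ i → (tauU p i).length ≤ m → (tauU p i).length < (tauU p (i + 1)).length := by
    intro i hji hle
    apply tauU_grows
    exact ⟨j0, by omega, hpre,
      prefix_of_isPrefixOf_le (tauU_isPrefixOf hU i) (Phi_get_spec hU _ hpre) (by omega),
      by omega⟩
  have key : ∀ k, m < (tauU p (j0 + k)).length ∨ k ≤ (tauU p (j0 + k)).length := by
    intro k
    induction k with
    | zero => right; omega
    | succ k IH =>
      have hmono := (tauU_prefix_le p (show j0 + k ≤ j0 + (k+1) by omega)).length_le
      rcases IH with h | h
      · left; omega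
      · by_cases h2 : m < (tauU p (j0 + k)).length
        · left; omega
        · have hst := step (j0 + k) (by omega) (by omega)
          right
          have heq : j0 + k + 1 = j0 + (k + 1) := by omega
          rw [heq] at hst
          omega
  rcases key (m + 1) with h | h
  · exact ⟨j0 + (m + 1), h⟩
  · exact ⟨j0 + (m + 1), by omega⟩

noncomputable def ccode (p : Baire) : Baire := fun i =>
  cpair (Encodable.encode ([] : List ℕ)) (Encodable.encode (tauU p (i + 1)))

lemma wn_ccode (p : Baire) (i : ℕ) : wn (ccode p) i = [] :=
  (wn_wk_of_eq (q := ccode p) (i := i) rfl).1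

lemma wk_ccode (p : Baire) (i : ℕ) : wk (ccode p) i = tauU p (i + 1) :=
  (wn_wk_of_eq (q := ccode p) (i := i) rfl).2

lemma consistent_ccode (p : Baire) : ConsistentCode (ccode p) := by
  intro i j _
  rw [wk_ccode, wk_ccode]
  rcases le_total i j with h | h
  · exact Or.inl (tauU_prefix_le p (by omega))
  · exact Or.inr (tauU_prefix_le p (by omega))

lemma Phi_ccode_dom {p : Baire} (hU : (U p).Dom) (x : Baire) : (Phi (ccode p) x).Dom := by
  refine ⟨consistent_ccode p, ?_⟩
  intro m
  obtain ⟨i, hi⟩ := tauU_unbounded hU m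
  refine ⟨i, by rw [wn_ccode]; exact isPrefixOf_nil x, ?_⟩
  rw [wk_ccode]
  have := (tauU_prefix_le p (show i ≤ i + 1 by omega)).length_le
  omega

lemma Phi_ccode_get {p : Baire} (hU : (U p).Dom) (x : Baire) :
    (Phi (ccode p) x).get (Phi_ccode_dom hU x) = (U p).get hU := by
  apply Phi_get_eq
  intro i _
  rw [wk_ccode]
  exact tauU_isPrefixOf hU (i + 1)

/-! ### continuity of ccode -/

lemma tauU_local (p : Baire) (i : ℕ) :
    ∃ N, ∀ q' : Baire, (∀ n < N, q' n = p n) → tauU q' i = tauU p i := by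
  induction i with
  | zero => exact ⟨0, fun _ _ => rfl⟩
  | succ i IH =>
    obtain ⟨N, hN⟩ := IH
    set M := Finset.sup (Finset.range (i + 1)) (fun j => 2 * (wn (evens p) j).length + 2) with hM
    refine ⟨N + (2 * i + 2) + M, ?_⟩
    intro q' hq'
    have htau : tauU q' i = tauU p i := hN q' (fun n hn => hq' n (by omega))
    have hev : ∀ j < i + 1, evens q' j = evens p j := by
      intro j hj
      exact hq' (2 * j) (by omega)
    have hwn : ∀ j < i + 1, wn (evens q') j = wn (evens p) j := by
      intro j hj
      unfold wn
      rw [hev j hj]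
    have hwk : ∀ j < i + 1, wk (evens q') j = wk (evens p) j := by
      intro j hj
      unfold wk
      rw [hev j hj]
    have hpre : ∀ j < i + 1,
        (IsPrefixOf (wn (evens q') j) (odds q') ↔ IsPrefixOf (wn (evens p) j) (odds p)) := by
      intro j hj
      rw [hwn j hj]
      apply isPrefixOf_congr
      intro n hn
      show q' (2 * n + 1) = p (2 * n + 1)
      apply hq'
      have hsup : 2 * (wn (evens p) j).length + 2 ≤ M := by
        rw [hM]
        exact Finset.le_sup (f := fun j => 2 * (wn (evens p) j).length + 2)
          (Finset.mem_range.2 hj)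
      omega
    have hiff : ∀ j, (j < i + 1 ∧ IsPrefixOf (wn (evens q') j) (odds q') ∧
        tauU q' i <+: wk (evens q') j ∧ (tauU q' i).length < (wk (evens q') j).length) ↔
        (j < i + 1 ∧ IsPrefixOf (wn (evens p) j) (odds p) ∧
        tauU p i <+: wk (evens p) j ∧ (tauU p i).length < (wk (evens p) j).length) := by
      intro j
      constructor
      · rintro ⟨hj, h1, h2, h3⟩
        rw [hpre j hj] at h1
        rw [htau, hwk j hj] at h2 h3
        exact ⟨hj, h1, h2, h3⟩
      · rintro ⟨hj, h1, h2, h3⟩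
        rw [← hpre j hj] at h1
        rw [← htau] at h2 h3
        rw [← hwk j hj] at h2 h3
        exact ⟨hj, h1, h2, h3⟩
    conv_lhs => rw [tauU]
    conv_rhs => rw [tauU]
    by_cases hc : ∃ j, j < i + 1 ∧ IsPrefixOf (wn (evens p) j) (odds p) ∧
        tauU p i <+: wk (evens p) j ∧ (tauU p i).length < (wk (evens p) j).length
    · have hcq : ∃ j, j < i + 1 ∧ IsPrefixOf (wn (evens q') j) (odds q') ∧
          tauU q' i <+: wk (evens q') j ∧ (tauU q' i).length < (wk (evens q') j).length := by
        obtain ⟨j, hj⟩ := hc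
        exact ⟨j, (hiff j).2 hj⟩
      rw [dif_pos hcq, dif_pos hc, nat_find_congr hiff hcq hc]
      exact hwk _ (Nat.find_spec hc).1
    · have hcq : ¬ ∃ j, j < i + 1 ∧ IsPrefixOf (wn (evens q') j) (odds q') ∧
          tauU q' i <+: wk (evens q') j ∧ (tauU q' i).length < (wk (evens q') j).length := by
        intro hcq
        obtain ⟨j, hj⟩ := hcq
        exact hc ⟨j, (hiff j).1 hj⟩
      rw [dif_neg hcq, dif_neg hc, htau]

lemma ccode_continuous : Continuous ccode := by
  apply continuous_of_locally_determined
  intro p i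
  obtain ⟨N, hN⟩ := tauU_local p (i + 1)
  exact ⟨N, fun q' hq' => by unfold ccode; rw [hN q' hq']⟩

/-! ### effectively discontinuous implies DIS ≤*_sW f -/

lemma effectively_discontinuous_implies_contStrong {f : Problem}
    (h : EffectivelyDiscontinuous f) : ContStrongWeihrauchRed DIS f := by
  obtain ⟨D, hDcont, hDdis⟩ := h
  refine ⟨fun t => Part.some t, fun p => Part.some (D (ccode p)), continuousPF_id,
    continuousPF_of_continuous (hDcont.comp ccode_continuous), ?_⟩
  intro G hG
  apply realizes_of_mem
  intro p _
  obtain ⟨hne, hdis⟩ := hDdis (ccode p)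
  obtain ⟨t, htG, htf⟩ := mem_of_realizes hG hne
  refine ⟨t, ?_, ?_⟩
  · apply Part.mem_bind_iff.2
    refine ⟨D (ccode p), Part.mem_some _, ?_⟩
    exact Part.mem_bind_iff.2 ⟨t, htG, Part.mem_some _⟩
  · show t ∉ U p
    intro hmem
    obtain ⟨hU, hval⟩ := hmem
    refine hdis t ⟨Phi_ccode_dom hU _, ?_⟩ htf
    rw [Phi_ccode_get hU _, hval]

end
noncomputable section
open Classical

/-! ### the diagonal (recursion-theorem) construction -/

def pqpre (es : List ℕ) (q : Baire) (n : ℕ) : ℕ :=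
  if n % 2 = 0 then es.getD (n / 2) 0 else q (n / 2)

def ppre (es : List ℕ) (q : Baire) : List ℕ := (List.range (2 * es.length)).map (pqpre es q)

def wcomb (es τ : List ℕ) (q : Baire) : List ℕ :=
  (List.range (2 * min (2 * es.length) τ.length)).map fun n =>
    if n % 2 = 0 then pqpre es q (n / 2) else τ.getD (n / 2) 0

noncomputable def tstep (q : Baire) (κ : List ℕ) (i : ℕ) (τ : List ℕ) : List ℕ :=
  if h : ∃ j, j < i ∧ wn q j <+: κ ∧ τ <+: wk q j ∧ τ.length < (wk q j).length
  then wk q (Nat.find h) else τ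

noncomputable def enext (hh : List ℕ → List ℕ) (q : Baire) (i : ℕ)
    (st : List ℕ × List ℕ) : List ℕ :=
  st.1 ++ [cpair (Encodable.encode (histN q i)) (Encodable.encode (hh (wcomb st.1 st.2 q)))]

noncomputable def estate (hk hh : List ℕ → List ℕ) (q : Baire) : ℕ → List ℕ × List ℕ
  | 0 => ([], [])
  | i + 1 =>
    (enext hh q i (estate hk hh q i),
      tstep q (hk (ppre (enext hh q i (estate hk hh q i)) q)) (i + 1) (estate hk hh q i).2)

noncomputable def eFun (hk hh : List ℕ → List ℕ) (q : Baire) : Baire :=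
  fun i => (estate hk hh q (i + 1)).1.getD i 0

noncomputable def pqFun (hk hh : List ℕ → List ℕ) (q : Baire) : Baire :=
  bpair (eFun hk hh q) q

noncomputable def outW (hk hh : List ℕ → List ℕ) (q : Baire) (i : ℕ) : List ℕ :=
  hh (wcomb (estate hk hh q i).1 (estate hk hh q i).2 q)

variable {hk hh : List ℕ → List ℕ} {q : Baire}

lemma estate_succ (i : ℕ) :
    estate hk hh q (i + 1) =
      (enext hh q i (estate hk hh q i),
        tstep q (hk (ppre (enext hh q i (estate hk hh q i)) q)) (i + 1)
          (estate hk hh q i).2) := rfl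

lemma estate_fst_length (i : ℕ) : (estate hk hh q i).1.length = i := by
  induction i with
  | zero => rfl
  | succ i IH => rw [estate_succ]; simp [enext, IH]

lemma tstep_prefix (κ : List ℕ) (i : ℕ) (τ : List ℕ) : τ <+: tstep q κ i τ := by
  unfold tstep
  split
  · next h => exact (Nat.find_spec h).2.2.1
  · exact List.prefix_refl _

lemma tstep_grows {κ : List ℕ} {i : ℕ} {τ : List ℕ}
    (h : ∃ j, j < i ∧ wn q j <+: κ ∧ τ <+: wk q j ∧ τ.length < (wk q j).length) :
    τ.length < (tstep q κ i τ).length := by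
  rw [tstep, dif_pos h]
  exact (Nat.find_spec h).2.2.2

lemma estate_snd_prefix_succ (i : ℕ) : (estate hk hh q i).2 <+: (estate hk hh q (i + 1)).2 := by
  rw [estate_succ]
  exact tstep_prefix _ _ _

lemma estate_snd_prefix_le {i j : ℕ} (h : i ≤ j) :
    (estate hk hh q i).2 <+: (estate hk hh q j).2 := by
  induction j with
  | zero => simp_all
  | succ j IH =>
    rcases Nat.lt_or_ge i (j + 1) with h' | h'
    · exact (IH (by omega)).trans (estate_snd_prefix_succ j)
    · have : i = j + 1 := by omega
      subst this; exact List.prefix_refl _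

lemma estate_fst_prefix_le {i j : ℕ} (h : i ≤ j) :
    (estate hk hh q i).1 <+: (estate hk hh q j).1 := by
  induction j with
  | zero => simp_all
  | succ j IH =>
    rcases Nat.lt_or_ge i (j + 1) with h' | h'
    · refine (IH (by omega)).trans ?_
      rw [estate_succ]
      exact List.prefix_append _ _
    · have : i = j + 1 := by omega
      subst this; exact List.prefix_refl _

lemma estate_fst_getD {i j : ℕ} (h : j < i) :
    (estate hk hh q i).1.getD j 0 = eFun hk hh q j := by
  show _ = (estate hk hh q (j + 1)).1.getD j 0
  rw [eq_comm]
  apply getD_eq_of_prefix (estate_fst_prefix_le (by omega))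
  rw [estate_fst_length]; omega

lemma pqpre_estate {i n : ℕ} (h : n < 2 * i) :
    pqpre (estate hk hh q i).1 q n = pqFun hk hh q n := by
  unfold pqpre pqFun bpair
  split
  · rw [estate_fst_getD (by omega)]
  · rfl

lemma ppre_estate (i : ℕ) :
    ppre (estate hk hh q i).1 q = histN (pqFun hk hh q) (2 * i) := by
  unfold ppre histN
  rw [estate_fst_length]
  apply List.map_congr_left
  intro n hn
  exact pqpre_estate (by simpa using hn)

lemma pqpre_congr {es es' : List ℕ} (h : es <+: es') {n : ℕ} (hn : n < 2 * es.length) :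
    pqpre es q n = pqpre es' q n := by
  unfold pqpre
  split
  · exact getD_eq_of_prefix h (by omega)
  · rfl

lemma wcomb_mono {es es' τ τ' : List ℕ} (he : es <+: es') (ht : τ <+: τ') :
    wcomb es τ q <+: wcomb es' τ' q := by
  have hlen : 2 * min (2 * es.length) τ.length ≤ 2 * min (2 * es'.length) τ'.length := by
    have h1 := he.length_le
    have h2 := ht.length_le
    omega
  unfold wcomb
  rw [List.prefix_iff_eq_take]
  apply List.ext_getElem (by simp; omega)
  intro n h1 h2
  simp only [List.getElem_take, List.getElem_map, List.getElem_range]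
  simp only [List.length_map, List.length_range] at h1
  split
  · exact pqpre_congr he (by omega)
  · exact getD_eq_of_prefix ht (by omega)

lemma wcomb_estate_prefix {i j : ℕ} (h : i ≤ j) :
    wcomb (estate hk hh q i).1 (estate hk hh q i).2 q <+:
      wcomb (estate hk hh q j).1 (estate hk hh q j).2 q :=
  wcomb_mono (estate_fst_prefix_le h) (estate_snd_prefix_le h)

lemma eFun_eq (i : ℕ) :
    eFun hk hh q i = cpair (Encodable.encode (histN q i)) (Encodable.encode (outW hk hh q i)) := by
  unfold eFun
  rw [estate_succ]
  show (enext hh q i (estate hk hh q i)).getD i 0 = _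
  unfold enext
  rw [List.getD_eq_getElem _ _ (by simp [estate_fst_length])]
  have hl : i = (estate hk hh q i).1.length := (estate_fst_length i).symm
  rw [show ((estate hk hh q i).1 ++ [cpair (Encodable.encode (histN q i))
      (Encodable.encode (hh (wcomb (estate hk hh q i).1 (estate hk hh q i).2 q)))])[i]'(by
        simp [estate_fst_length]) = _ from List.getElem_append_right (by omega)]
  simp [estate_fst_length, outW]

lemma wn_eFun (i : ℕ) : wn (eFun hk hh q) i = histN q i :=
  (wn_wk_of_eq (eFun_eq i)).1

lemma wk_eFun (i : ℕ) : wk (eFun hk hh q) i = outW hk hh q i :=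
  (wn_wk_of_eq (eFun_eq i)).2

lemma outW_prefix_le (hhmono : MonotoneWord hh) {i j : ℕ} (h : i ≤ j) :
    outW hk hh q i <+: outW hk hh q j :=
  hhmono _ _ (wcomb_estate_prefix h)

lemma consistent_eFun (hhmono : MonotoneWord hh) : ConsistentCode (eFun hk hh q) := by
  intro i j _
  rw [wk_eFun, wk_eFun]
  rcases le_total i j with h | h
  · exact Or.inl (outW_prefix_le hhmono h)
  · exact Or.inr (outW_prefix_le hhmono h)

lemma evens_pqFun : evens (pqFun hk hh q) = eFun hk hh q := evens_bpair _ _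

lemma odds_pqFun : odds (pqFun hk hh q) = q := odds_bpair _ _

end
noncomputable section
open Classical

variable {hk hh : List ℕ → List ℕ}

/-! ### locality of the diagonal construction -/

lemma wcomb_length (es τ : List ℕ) (q : Baire) :
    (wcomb es τ q).length = 2 * min (2 * es.length) τ.length := by
  simp [wcomb]

lemma pqpre_congr_q {q q' : Baire} {es : List ℕ} (h : ∀ n < es.length, q' n = q n)
    {m : ℕ} (hm : m < 2 * es.length) : pqpre es q' m = pqpre es q m := by
  unfold pqpre
  split
  · rfl
  · exact h _ (by omega)

lemma wcomb_congr_q {q q' : Baire} {es τ : List ℕ} (h : ∀ n < es.length, q' n = q n) :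
    wcomb es τ q' = wcomb es τ q := by
  unfold wcomb
  apply List.map_congr_left
  intro n hn
  simp only [List.mem_range] at hn
  split
  · exact pqpre_congr_q h (by omega)
  · rfl

lemma ppre_congr_q {q q' : Baire} {es : List ℕ} (h : ∀ n < es.length, q' n = q n) :
    ppre es q' = ppre es q := by
  unfold ppre
  apply List.map_congr_left
  intro n hn
  simp only [List.mem_range] at hn
  exact pqpre_congr_q h hn

lemma wn_congr {q q' : Baire} {j : ℕ} (h : q' j = q j) : wn q' j = wn q j := by
  unfold wn; rw [h]

lemma wk_congr {q q' : Baire} {j : ℕ} (h : q' j = q j) : wk q' j = wk q j := by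
  unfold wk; rw [h]

lemma tstep_congr {q q' : Baire} (κ : List ℕ) (i : ℕ) (τ : List ℕ)
    (h : ∀ j < i, q' j = q j) : tstep q' κ i τ = tstep q κ i τ := by
  have hiff : ∀ j, (j < i ∧ wn q' j <+: κ ∧ τ <+: wk q' j ∧ τ.length < (wk q' j).length) ↔
      (j < i ∧ wn q j <+: κ ∧ τ <+: wk q j ∧ τ.length < (wk q j).length) := by
    intro j
    constructor
    · rintro ⟨hj, h1, h2, h3⟩
      rw [wn_congr (h j hj)] at h1
      rw [wk_congr (h j hj)] at h2 h3
      exact ⟨hj, h1, h2, h3⟩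
    · rintro ⟨hj, h1, h2, h3⟩
      rw [← wn_congr (h j hj)] at h1
      rw [← wk_congr (h j hj)] at h2 h3
      exact ⟨hj, h1, h2, h3⟩
  unfold tstep
  by_cases hc : ∃ j, j < i ∧ wn q j <+: κ ∧ τ <+: wk q j ∧ τ.length < (wk q j).length
  · have hcq : ∃ j, j < i ∧ wn q' j <+: κ ∧ τ <+: wk q' j ∧ τ.length < (wk q' j).length := by
      obtain ⟨j, hj⟩ := hc; exact ⟨j, (hiff j).2 hj⟩
    rw [dif_pos hcq, dif_pos hc, nat_find_congr hiff hcq hc]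
    exact wk_congr (h _ (Nat.find_spec hc).1)
  · have hcq : ¬ ∃ j, j < i ∧ wn q' j <+: κ ∧ τ <+: wk q' j ∧ τ.length < (wk q' j).length := by
      intro hcq; obtain ⟨j, hj⟩ := hcq; exact hc ⟨j, (hiff j).1 hj⟩
    rw [dif_neg hcq, dif_neg hc]

lemma estate_local {q q' : Baire} (i : ℕ) (h : ∀ n < i, q' n = q n) :
    estate hk hh q' i = estate hk hh q i := by
  induction i with
  | zero => rfl
  | succ i IH =>
    have hst : estate hk hh q' i = estate hk hh q i := IH (fun n hn => h n (by omega))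
    have hlen1 : (estate hk hh q i).1.length = i := estate_fst_length i
    have henext : enext hh q' i (estate hk hh q i) = enext hh q i (estate hk hh q i) := by
      unfold enext
      rw [histN_congr (fun n hn => h n (by omega)),
        wcomb_congr_q (fun n hn => h n (by omega))]
    rw [estate_succ, estate_succ, hst, henext]
    have hlen2 : (enext hh q i (estate hk hh q i)).length = i + 1 := by
      simp [enext, hlen1]
    rw [ppre_congr_q (fun n hn => h n (by omega))]
    rw [tstep_congr _ _ _ (fun j hj => h j hj)]

lemma eFun_local {q q' : Baire} (i : ℕ) (h : ∀ n < i + 1, q' n = q n) :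
    eFun hk hh q' i = eFun hk hh q i := by
  unfold eFun
  rw [estate_local (i + 1) h]

lemma pqFun_agree {q q' : Baire} {m : ℕ} (h : ∀ n < m, q' n = q n) :
    ∀ j < m, pqFun hk hh q' j = pqFun hk hh q j := by
  intro j hj
  unfold pqFun bpair
  split
  · exact eFun_local _ (fun n hn => h n (by omega))
  · exact h _ (by omega)

end
noncomputable section
open Classical

variable {hk hh : List ℕ → List ℕ}

lemma diag_U_mem {H K : Baire →. Baire}
    (hhmono : MonotoneWord hh) (hhapp : Approximates hh H)
    (hkmono : MonotoneWord hk) (hkapp : Approximates hk K)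
    {q s t y : Baire}
    (hs : s ∈ K (pqFun hk hh q)) (ht : t ∈ Phi q s)
    (hy : y ∈ H (bpair (pqFun hk hh q) t)) :
    y ∈ U (pqFun hk hh q) := by
  obtain ⟨hKd, hsget⟩ := hs
  obtain ⟨hPd, htget⟩ := ht
  obtain ⟨hHd, hyget⟩ := hy
  have hKa := hkapp (pqFun hk hh q) hKd
  have hκ : ∀ i, IsPrefixOf (hk (histN (pqFun hk hh q) (2 * i))) s := by
    intro i; rw [← hsget]; exact hKa.1 _ (isPrefixOf_histN _ _)
  have hκub : ∀ m, ∃ i, m < (hk (histN (pqFun hk hh q) (2 * i))).length := by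
    intro m
    obtain ⟨v, hv, hlen⟩ := hKa.2 m
    have hveq : v = histN (pqFun hk hh q) v.length := hv
    refine ⟨v.length, ?_⟩
    have h2 : v <+: histN (pqFun hk hh q) (2 * v.length) := by
      conv_lhs => rw [hveq]
      exact histN_prefix_histN _ (by omega)
    have := (hkmono _ _ h2).length_le
    omega
  have hκ_est : ∀ i, ppre (estate hk hh q i).1 q = histN (pqFun hk hh q) (2 * i) :=
    ppre_estate
  -- τ is a prefix of t
  have hτpre : ∀ i, IsPrefixOf ((estate hk hh q i).2) t := by
    intro i
    induction i with
    | zero => exact isPrefixOf_nil t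
    | succ i IH =>
      rw [estate_succ]
      show IsPrefixOf (tstep q _ (i + 1) _) t
      unfold tstep
      split
      · next hcond =>
        obtain ⟨hj, hwn, _, _⟩ := Nat.find_spec hcond
        have hκp : IsPrefixOf (hk (ppre (enext hh q i (estate hk hh q i)) q)) s := by
          have h1 := hκ (i + 1)
          rw [← hκ_est (i + 1)] at h1
          exact h1
        have hwns : IsPrefixOf (wn q (Nat.find hcond)) s := IsPrefixOf.trans_prefix hwn hκp
        rw [← htget]
        exact Phi_get_spec hPd _ hwns
      · exact IH
  -- τ lengths are unbounded
  have hτub : ∀ m, ∃ i, m < ((estate hk hh q i).2).length := by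
    intro m
    obtain ⟨j0, hj0pre, hj0len⟩ := hPd.2 m
    obtain ⟨i0', hi0'⟩ := hκub (wn q j0).length
    have hwkt : IsPrefixOf (wk q j0) t := htget ▸ Phi_get_spec hPd _ hj0pre
    have hstep : ∀ i, max i0' (j0 + 1) ≤ i → ((estate hk hh q i).2).length ≤ m →
        ((estate hk hh q i).2).length < ((estate hk hh q (i + 1)).2).length := by
      intro i hi hle
      rw [estate_succ]
      show _ < (tstep q (hk (ppre (enext hh q i (estate hk hh q i)) q)) (i + 1) _).length
      apply tstep_grows
      refine ⟨j0, by omega, ?_, ?_, by omega⟩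
      · have hκeq : ppre (enext hh q i (estate hk hh q i)) q
            = histN (pqFun hk hh q) (2 * (i + 1)) := hκ_est (i + 1)
        rw [hκeq]
        apply prefix_of_isPrefixOf_le hj0pre (hκ (i + 1))
        have h1 := (hkmono _ _ (histN_prefix_histN (pqFun hk hh q)
          (show 2 * i0' ≤ 2 * (i + 1) by omega))).length_le
        omega
      · exact prefix_of_isPrefixOf_le (hτpre i) hwkt (by omega)
    have key : ∀ k, m < ((estate hk hh q (max i0' (j0 + 1) + k)).2).length ∨
        k ≤ ((estate hk hh q (max i0' (j0 + 1) + k)).2).length := by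
      intro k
      induction k with
      | zero => right; omega
      | succ k IH =>
        have hmono := (estate_snd_prefix_le (hk := hk) (hh := hh) (q := q)
          (show max i0' (j0 + 1) + k ≤ max i0' (j0 + 1) + (k + 1) by omega)).length_le
        rcases IH with h | h
        · left; omega
        · by_cases h2 : m < ((estate hk hh q (max i0' (j0 + 1) + k)).2).length
          · left; omega
          · have hst := hstep (max i0' (j0 + 1) + k) (by omega) (by omega)
            right
            have heq : max i0' (j0 + 1) + k + 1 = max i0' (j0 + 1) + (k + 1) := by omega
            rw [heq] at hst
            omega
    rcases key (m + 1) with h | h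
    · exact ⟨_, h⟩
    · exact ⟨max i0' (j0 + 1) + (m + 1), by omega⟩
  -- wcomb is a prefix of ⟨p, t⟩
  have hHa := hhapp (bpair (pqFun hk hh q) t) hHd
  have hwcomb_pre : ∀ i,
      IsPrefixOf (wcomb (estate hk hh q i).1 (estate hk hh q i).2 q)
        (bpair (pqFun hk hh q) t) := by
    intro i
    apply isPrefixOf_of_forall_getElem
    intro n hn
    have hn' : n < 2 * min (2 * i) ((estate hk hh q i).2).length := by
      rw [wcomb_length, estate_fst_length] at hn
      exact hn
    simp only [wcomb, List.getElem_map, List.getElem_range]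
    unfold bpair
    split
    · next heven =>
      rw [pqpre_estate (by omega)]
    · next hodd =>
      rw [List.getD_eq_getElem _ _ (by omega)]
      exact (hτpre i).getElem (by omega)
  have hout_pre : ∀ i, IsPrefixOf (outW hk hh q i) y := by
    intro i; rw [← hyget]; exact hHa.1 _ (hwcomb_pre i)
  have hout_ub : ∀ m, ∃ i, m < (outW hk hh q i).length := by
    intro m
    obtain ⟨v, hv, hlen⟩ := hHa.2 m
    have hveq : v = histN (bpair (pqFun hk hh q) t) v.length := hv
    obtain ⟨i1, hi1⟩ := hτub v.length
    refine ⟨max i1 v.length, ?_⟩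
    set i := max i1 v.length with hidef
    have hτlen := (estate_snd_prefix_le (hk := hk) (hh := hh) (q := q)
      (show i1 ≤ i by omega)).length_le
    have hwceq : wcomb (estate hk hh q i).1 (estate hk hh q i).2 q
        = histN (bpair (pqFun hk hh q) t)
            (2 * min (2 * i) ((estate hk hh q i).2).length) := by
      have h1 := hwcomb_pre i
      rw [isPrefixOf_iff_histN] at h1
      rw [h1, wcomb_length, estate_fst_length]
    have hvpre : v <+: wcomb (estate hk hh q i).1 (estate hk hh q i).2 q := by
      conv_lhs => rw [hveq]
      rw [hwceq]
      apply histN_prefix_histN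
      omega
    have := (hhmono _ _ hvpre).length_le
    unfold outW
    omega
  -- conclude
  have hUdom : (Phi (eFun hk hh q) q).Dom := by
    refine ⟨consistent_eFun hhmono, ?_⟩
    intro m
    obtain ⟨i, hi⟩ := hout_ub m
    exact ⟨i, by rw [wn_eFun]; exact isPrefixOf_histN q i, by rw [wk_eFun]; exact hi⟩
  have hUget : (Phi (eFun hk hh q) q).get hUdom = y := by
    apply Phi_get_eq
    intro i _
    rw [wk_eFun]
    exact hout_pre i
  show y ∈ U (bpair (eFun hk hh q) q)
  rw [U_bpair]
  exact hUget ▸ Part.get_mem hUdom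

end
noncomputable section
open Classical

lemma contWeihrauch_implies_effectively_discontinuous {f : Problem}
    (h : ContWeihrauchRed DIS f) : EffectivelyDiscontinuous f := by
  obtain ⟨H, K, ⟨hh, hhmono, hhapp⟩, ⟨hk, hkmono, hkapp⟩, hred⟩ := h
  set G0 : Baire →. Baire := fun s => ⟨(f s).Nonempty, fun hs => hs.some⟩ with hG0
  have hG0real : Realizes G0 f := fun p hp => ⟨hp, hp.some_mem⟩
  have h0 := hred G0 hG0real
  have hdomK : ∀ q : Baire, (K (pqFun hk hh q)).Dom := by
    intro q
    obtain ⟨a, ha, _⟩ := mem_of_realizes h0 (DIS_nonempty (pqFun hk hh q))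
    obtain ⟨s, hsK, _⟩ := Part.mem_bind_iff.1 ha
    exact Part.dom_iff_mem.2 ⟨s, hsK⟩
  refine ⟨fun q => (K (pqFun hk hh q)).get (hdomK q), ?_, ?_⟩
  · -- continuity
    apply continuous_of_locally_determined
    intro q n
    obtain ⟨v, hv, hlen⟩ := (hkapp (pqFun hk hh q) (hdomK q)).2 n
    have hveq : v = histN (pqFun hk hh q) v.length := hv
    have hκlen : n < (hk (histN (pqFun hk hh q) (2 * v.length))).length := by
      have h2 : v <+: histN (pqFun hk hh q) (2 * v.length) := by
        conv_lhs => rw [hveq]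
        exact histN_prefix_histN _ (by omega)
      have := (hkmono _ _ h2).length_le
      omega
    refine ⟨2 * v.length, ?_⟩
    intro q' hq'
    have hval : ∀ qq : Baire,
        histN (pqFun hk hh qq) (2 * v.length) = histN (pqFun hk hh q) (2 * v.length) →
        (K (pqFun hk hh qq)).get (hdomK qq) n
          = (hk (histN (pqFun hk hh q) (2 * v.length))).getD n 0 := by
      intro qq hqq
      have hpre : IsPrefixOf (hk (histN (pqFun hk hh qq) (2 * v.length)))
          ((K (pqFun hk hh qq)).get (hdomK qq)) :=
        (hkapp _ (hdomK qq)).1 _ (isPrefixOf_histN _ _)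
      rw [hqq] at hpre
      rw [List.getD_eq_getElem _ _ hκlen]
      exact (hpre.getElem hκlen).symm
    have hpq : histN (pqFun hk hh q') (2 * v.length)
        = histN (pqFun hk hh q) (2 * v.length) :=
      histN_congr (pqFun_agree hq')
    rw [hval q' hpq, hval q rfl]
  · -- discontinuity function
    intro q
    constructor
    · obtain ⟨a, ha, _⟩ := mem_of_realizes h0 (DIS_nonempty (pqFun hk hh q))
      obtain ⟨s, hsK, ha2⟩ := Part.mem_bind_iff.1 ha
      obtain ⟨t, htG, _⟩ := Part.mem_bind_iff.1 ha2
      obtain ⟨htd, _⟩ := htG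
      have hseq : s = (K (pqFun hk hh q)).get (hdomK q) := by
        obtain ⟨hd, hg⟩ := hsK
        rw [← hg]
      show (f ((K (pqFun hk hh q)).get (hdomK q))).Nonempty
      rw [← hseq]
      exact htd
    · intro y hy hyf
      obtain ⟨hPd, hyget⟩ := hy
      set G1 : Baire →. Baire :=
        fun s => if s = (K (pqFun hk hh q)).get (hdomK q) then Part.some y else G0 s with hG1
      have hG1real : Realizes G1 f := by
        intro p hp
        by_cases hps : p = (K (pqFun hk hh q)).get (hdomK q)
        · have hg1 : G1 p = Part.some y := by rw [hG1]; simp [hps]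
          refine ⟨by rw [hg1]; trivial, ?_⟩
          have : (G1 p).get (by rw [hg1]; trivial) = y := by
            simp [hg1]
          rw [this, hps]
          exact hyf
        · have hg1 : G1 p = G0 p := by rw [hG1]; simp [hps]
          rw [hg1]
          exact hG0real p hp
      have h1 := hred G1 hG1real
      obtain ⟨a, ha, haDIS⟩ := mem_of_realizes h1 (DIS_nonempty (pqFun hk hh q))
      obtain ⟨s, hsK, ha2⟩ := Part.mem_bind_iff.1 ha
      have hseq : s = (K (pqFun hk hh q)).get (hdomK q) := by
        obtain ⟨hd, hg⟩ := hsK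
        rw [← hg]
      obtain ⟨t, htG, haH⟩ := Part.mem_bind_iff.1 ha2
      have hteq : t = y := by
        rw [hG1] at htG
        simp only [hseq, if_pos rfl] at htG
        exact (Part.mem_some_iff.1 htG)
      subst hteq
      have hty : t ∈ Phi q s := by
        rw [hseq]
        exact ⟨hPd, hyget⟩
      exact haDIS (diag_U_mem hhmono hhapp hkmono hkapp hsK hty haH)

lemma effectively_discontinuous_iff_contWeihrauch {f : Problem} :
    ContWeihrauchRed DIS f ↔ EffectivelyDiscontinuous f :=
  ⟨contWeihrauch_implies_effectively_discontinuous,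
    fun h => contStrong_implies_contWeihrauch (effectively_discontinuous_implies_contStrong h)⟩

end

/-- `DIS ≤*_W f ⟺ DIS ≤*_sW f ⟺ f` is effectively discontinuous. -/
theorem DIS_contRed_iff_effectively_discontinuous (f : Problem) :
    (ContWeihrauchRed DIS f ↔ EffectivelyDiscontinuous f) ∧
    (ContStrongWeihrauchRed DIS f ↔ EffectivelyDiscontinuous f) := by
  constructor
  · exact effectively_discontinuous_iff_contWeihrauch
  · exact ⟨fun h => contWeihrauch_implies_effectively_discontinuous
      (contStrong_implies_contWeihrauch h),
      effectively_discontinuous_implies_contStrong⟩
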